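/- arXiv:2302.05743 — 3 statements merged into one kernel-verified Lean document; each statement's English description precedes it below -/
import Mathlib

section
/- Let n be a natural number and let x, y : Fin n → EuclideanSpace ℝ (Fin 3) be two point configurations. Then there exist a permutation σ of Fin n and a bijective isometry f of EuclideanSpace ℝ (Fin 3) (an E(3) transformation) such that y i = f (x (σ i)) for all i, if and only if there exists a permutation σ of Fin n such that dist (x i) (x j) = dist (y (σ i)) (y (σ j)) for all i, j. (In the paper's language: two geometric graphs are congruent iff their corresponding distance graphs are isomorphic.) -/
open scoped RealInnerProductSpace

noncomputable abbrev E3 := EuclideanSpace ℝ (Fin 3)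

/-- The linear map `(Fin n → ℝ) →ₗ[ℝ] E` sending `c` to `∑ i, c i • u i`. -/
noncomputable def combMap {n : ℕ} (u : Fin n → E3) : (Fin n → ℝ) →ₗ[ℝ] E3 where
  toFun c := ∑ i, c i • u i
  map_add' a b := by simp [add_smul, Finset.sum_add_distrib]
  map_smul' r a := by simp [mul_smul, Finset.smul_sum]

lemma combMap_inner {n : ℕ} (u v : Fin n → E3)
    (h : ∀ i j, ⟪u i, u j⟫ = ⟪v i, v j⟫) (c : Fin n → ℝ) :
    ⟪combMap u c, combMap u c⟫ = ⟪combMap v c, combMap v c⟫ := by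
  simp only [combMap, LinearMap.coe_mk, AddHom.coe_mk, sum_inner, inner_sum,
    real_inner_smul_left, real_inner_smul_right]
  exact Finset.sum_congr rfl fun i _ => Finset.sum_congr rfl fun j _ => by rw [h]

lemma combMap_norm {n : ℕ} (u v : Fin n → E3)
    (h : ∀ i j, ⟪u i, u j⟫ = ⟪v i, v j⟫) (c : Fin n → ℝ) :
    ‖combMap u c‖ = ‖combMap v c‖ := by
  have := combMap_inner u v h c
  rw [real_inner_self_eq_norm_mul_norm, real_inner_self_eq_norm_mul_norm] at this
  nlinarith [norm_nonneg (combMap u c), norm_nonneg (combMap v c)]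

lemma combMap_single {n : ℕ} (u : Fin n → E3) (i : Fin n) :
    combMap u (Pi.single i 1) = u i := by
  simp [combMap, Pi.single_apply, ite_smul]

/-- Key extension lemma: families with equal Gram matrices are related by a
linear isometry equivalence. -/
lemma exists_linearIsometryEquiv {n : ℕ} (u v : Fin n → E3)
    (h : ∀ i j, ⟪u i, u j⟫ = ⟪v i, v j⟫) :
    ∃ F : E3 ≃ₗᵢ[ℝ] E3, ∀ i, F (u i) = v i := by
  set A := combMap u with hA
  set B := combMap v with hB
  have hnorm : ∀ c, ‖A c‖ = ‖B c‖ := combMap_norm u v h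
  have hker : LinearMap.ker A ≤ LinearMap.ker B := by
    intro c hc
    rw [LinearMap.mem_ker] at hc ⊢
    have := hnorm c
    rw [hc, norm_zero] at this
    exact norm_eq_zero.mp this.symm
  set B' := (LinearMap.ker A).liftQ B hker with hB'
  set e := A.quotKerEquivRange with he
  set L : LinearMap.range A →ₗ[ℝ] E3 := B'.comp e.symm.toLinearMap with hL
  have hLA : ∀ c : Fin n → ℝ, L ⟨A c, LinearMap.mem_range_self A c⟩ = B c := by
    intro c
    have h1 : e.symm ⟨A c, LinearMap.mem_range_self A c⟩ = (LinearMap.ker A).mkQ c :=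
      A.quotKerEquivRange_symm_apply_image c (LinearMap.mem_range_self A c)
    simp only [hL, LinearMap.comp_apply, LinearEquiv.coe_toLinearMap, h1, hB']
    exact Submodule.liftQ_apply _ _ _
  have hLnorm : ∀ z : LinearMap.range A, ‖L z‖ = ‖z‖ := by
    rintro ⟨z, c, rfl⟩
    rw [hLA c, ← hnorm c]
    rfl
  set ℓ : LinearMap.range A →ₗᵢ[ℝ] E3 := ⟨L, hLnorm⟩ with hℓ
  set F := ℓ.extend with hF
  have hsurj : Function.Surjective F := by
    have : Function.Injective F.toLinearMap := F.injective
    exact (LinearMap.injective_iff_surjective).mp this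
  refine ⟨LinearIsometryEquiv.ofSurjective F hsurj, fun i => ?_⟩
  have hui : u i ∈ LinearMap.range A := by
    refine ⟨Pi.single i 1, ?_⟩
    exact combMap_single u i
  have : F (u i) = v i := by
    have h2 := ℓ.extend_apply ⟨u i, hui⟩
    have h3 : ℓ ⟨u i, hui⟩ = v i := by
      have heq : (⟨u i, hui⟩ : LinearMap.range A) = ⟨A (Pi.single i 1), LinearMap.mem_range_self A _⟩ :=
        Subtype.ext (combMap_single u i).symm
      show L ⟨u i, hui⟩ = v i
      rw [heq, hLA]
      exact combMap_single v i
    exact h2.trans h3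
  rw [LinearIsometryEquiv.coe_ofSurjective]
  exact this

/-- Distance-matching families are related by an isometry equivalence. -/
lemma exists_isometryEquiv_of_dist_eq {n : ℕ} (p q : Fin (n + 1) → E3)
    (h : ∀ i j, dist (p i) (p j) = dist (q i) (q j)) :
    ∃ f : E3 ≃ᵢ E3, ∀ i, q i = f (p i) := by
  set u : Fin (n + 1) → E3 := fun i => p i - p 0 with hu
  set v : Fin (n + 1) → E3 := fun i => q i - q 0 with hv
  have hsub : ∀ i j, ‖u i - u j‖ = ‖v i - v j‖ := by
    intro i j
    have : u i - u j = p i - p j := sub_sub_sub_cancel_right _ _ _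
    have h2 : v i - v j = q i - q j := sub_sub_sub_cancel_right _ _ _
    rw [this, h2, ← dist_eq_norm, ← dist_eq_norm, h]
  have hn : ∀ i, ‖u i‖ = ‖v i‖ := by
    intro i
    simpa [hu, hv, ← dist_eq_norm] using h i 0
  have hinner : ∀ i j, ⟪u i, u j⟫ = ⟪v i, v j⟫ := by
    intro i j
    rw [real_inner_eq_norm_mul_self_add_norm_mul_self_sub_norm_sub_mul_self_div_two,
      real_inner_eq_norm_mul_self_add_norm_mul_self_sub_norm_sub_mul_self_div_two,
      hn i, hn j, hsub i j]
  obtain ⟨F, hF⟩ := exists_linearIsometryEquiv u v hinner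
  refine ⟨(IsometryEquiv.subRight (p 0)).trans
    (F.toIsometryEquiv.trans (IsometryEquiv.addRight (q 0))), fun i => ?_⟩
  have : F (p i - p 0) = q i - q 0 := hF i
  simp only [IsometryEquiv.trans_apply, IsometryEquiv.subRight_apply,
    IsometryEquiv.addRight_apply, LinearIsometryEquiv.coe_toIsometryEquiv, this]
  abel

/-- Two point configurations in `ℝ³` are congruent (related by a
permutation of indices together with a bijective isometry of the space, i.e. an E(3)
transformation) if and only if their distance graphs are isomorphic (some permutation
of indices matches all pairwise distances). -/
theorem congruent_iff_distance_graphs_isomorphic (n : ℕ)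
    (x y : Fin n → EuclideanSpace ℝ (Fin 3)) :
    (∃ (σ : Equiv.Perm (Fin n))
        (f : EuclideanSpace ℝ (Fin 3) ≃ᵢ EuclideanSpace ℝ (Fin 3)),
        ∀ i, y i = f (x (σ i))) ↔
      (∃ σ : Equiv.Perm (Fin n),
        ∀ i j, dist (x i) (x j) = dist (y (σ i)) (y (σ j))) := by
  constructor
  · rintro ⟨σ, f, hf⟩
    refine ⟨σ⁻¹, fun i j => ?_⟩
    have hi : y (σ⁻¹ i) = f (x i) := by rw [hf (σ⁻¹ i), Equiv.Perm.coe_inv, Equiv.apply_symm_apply]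
    have hj : y (σ⁻¹ j) = f (x j) := by rw [hf (σ⁻¹ j), Equiv.Perm.coe_inv, Equiv.apply_symm_apply]
    rw [hi, hj, f.dist_eq]
  · rintro ⟨σ, hσ⟩
    cases n with
    | zero => exact ⟨1, IsometryEquiv.refl _, fun i => i.elim0⟩
    | succ m =>
      obtain ⟨f, hf⟩ := exists_isometryEquiv_of_dist_eq x (fun i => y (σ i)) hσ
      refine ⟨σ⁻¹, f, fun i => ?_⟩
      have := hf (σ⁻¹ i)
      simpa using this
end

section
/- There exist injective point configurations x, y : Fin 6 → EuclideanSpace ℝ (Fin 3) and a single multiset M of real numbers such that: (1) for every i ∈ Fin 6, the multiset {dist (x i) (x j) : j ∈ Fin 6} equals M, and for every i ∈ Fin 6, the multiset {dist (y i) (y j) : j ∈ Fin 6} equals M (every node of both configurations has the same unordered distance list); yet (2) x and y are not congruent, i.e., there is no permutation σ of Fin 6 with dist (x i) (x j) = dist (y (σ i)) (y (σ j)) for all i, j. (Such a pair can be obtained by taking two suitable 6-vertex subsets of a regular icosahedron.) -/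
noncomputable section SixPoint

private def g : ℝ := (1 + Real.sqrt 5) / 2

private lemma g_sq : g ^ 2 = g + 1 := by
  have h5 : Real.sqrt 5 ^ 2 = 5 := Real.sq_sqrt (by norm_num)
  unfold g; nlinarith [h5]

private lemma g_gt_one : 1 < g := by
  have h5 : Real.sqrt 5 ^ 2 = 5 := Real.sq_sqrt (by norm_num)
  have h0 : 0 ≤ Real.sqrt 5 := Real.sqrt_nonneg 5
  unfold g; nlinarith

/-- the long distance `2 * sqrt (g^2+1)` -/
private def dc : ℝ := Real.sqrt (4 * g + 8)

private lemma dc_sq : dc ^ 2 = 4 * g + 8 :=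
  Real.sq_sqrt (by nlinarith [g_gt_one])

private lemma dc_pos : 0 < dc := Real.sqrt_pos.mpr (by nlinarith [g_gt_one])

private lemma dc_ne_two : dc ≠ 2 := by
  intro h
  have := dc_sq
  rw [h] at this
  nlinarith [g_gt_one]

private def pt (a b c : ℝ) : EuclideanSpace ℝ (Fin 3) := WithLp.toLp 2 ![a, b, c]

private lemma dist_pt (a b c a' b' c' : ℝ) :
    dist (pt a b c) (pt a' b' c') =
      Real.sqrt ((a - a')^2 + (b - b')^2 + (c - c')^2) := by
  rw [EuclideanSpace.dist_eq]
  simp [Fin.sum_univ_three, pt, Real.dist_eq, sq_abs]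

private lemma dist_val (a b c a' b' c' v : ℝ) (hv : 0 ≤ v)
    (h : (a - a')^2 + (b - b')^2 + (c - c')^2 = v^2) :
    dist (pt a b c) (pt a' b' c') = v := by
  rw [dist_pt, h, Real.sqrt_sq hv]

private def X : Fin 6 → EuclideanSpace ℝ (Fin 3) :=
  ![pt 0 1 g, pt 1 g 0, pt g 0 1, pt 0 (-1) (-g), pt (-1) (-g) 0, pt (-g) 0 (-1)]

private def Y : Fin 6 → EuclideanSpace ℝ (Fin 3) :=
  ![pt 0 1 g, pt 1 g 0, pt 0 1 (-g), pt 0 (-1) g, pt 0 (-1) (-g), pt (-1) (-g) 0]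

private lemma hx_0_1 : dist (X 0) (X 1) = 2 :=
  dist_val _ _ _ _ _ _ _ (by norm_num) (by nlinarith [g_sq])

private lemma hx_0_2 : dist (X 0) (X 2) = 2 :=
  dist_val _ _ _ _ _ _ _ (by norm_num) (by nlinarith [g_sq])

private lemma hx_0_3 : dist (X 0) (X 3) = dc :=
  dist_val _ _ _ _ _ _ _ (dc_pos.le) (by rw [dc_sq]; nlinarith [g_sq])

private lemma hx_0_4 : dist (X 0) (X 4) = (2*g) :=
  dist_val _ _ _ _ _ _ _ (by nlinarith [g_gt_one]) (by nlinarith [g_sq])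

private lemma hx_0_5 : dist (X 0) (X 5) = (2*g) :=
  dist_val _ _ _ _ _ _ _ (by nlinarith [g_gt_one]) (by nlinarith [g_sq])

private lemma hx_1_0 : dist (X 1) (X 0) = 2 :=
  dist_val _ _ _ _ _ _ _ (by norm_num) (by nlinarith [g_sq])

private lemma hx_1_2 : dist (X 1) (X 2) = 2 :=
  dist_val _ _ _ _ _ _ _ (by norm_num) (by nlinarith [g_sq])

private lemma hx_1_3 : dist (X 1) (X 3) = (2*g) :=
  dist_val _ _ _ _ _ _ _ (by nlinarith [g_gt_one]) (by nlinarith [g_sq])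

private lemma hx_1_4 : dist (X 1) (X 4) = dc :=
  dist_val _ _ _ _ _ _ _ (dc_pos.le) (by rw [dc_sq]; nlinarith [g_sq])

private lemma hx_1_5 : dist (X 1) (X 5) = (2*g) :=
  dist_val _ _ _ _ _ _ _ (by nlinarith [g_gt_one]) (by nlinarith [g_sq])

private lemma hx_2_0 : dist (X 2) (X 0) = 2 :=
  dist_val _ _ _ _ _ _ _ (by norm_num) (by nlinarith [g_sq])

private lemma hx_2_1 : dist (X 2) (X 1) = 2 :=
  dist_val _ _ _ _ _ _ _ (by norm_num) (by nlinarith [g_sq])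

private lemma hx_2_3 : dist (X 2) (X 3) = (2*g) :=
  dist_val _ _ _ _ _ _ _ (by nlinarith [g_gt_one]) (by nlinarith [g_sq])

private lemma hx_2_4 : dist (X 2) (X 4) = (2*g) :=
  dist_val _ _ _ _ _ _ _ (by nlinarith [g_gt_one]) (by nlinarith [g_sq])

private lemma hx_2_5 : dist (X 2) (X 5) = dc :=
  dist_val _ _ _ _ _ _ _ (dc_pos.le) (by rw [dc_sq]; nlinarith [g_sq])

private lemma hx_3_0 : dist (X 3) (X 0) = dc :=
  dist_val _ _ _ _ _ _ _ (dc_pos.le) (by rw [dc_sq]; nlinarith [g_sq])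

private lemma hx_3_1 : dist (X 3) (X 1) = (2*g) :=
  dist_val _ _ _ _ _ _ _ (by nlinarith [g_gt_one]) (by nlinarith [g_sq])

private lemma hx_3_2 : dist (X 3) (X 2) = (2*g) :=
  dist_val _ _ _ _ _ _ _ (by nlinarith [g_gt_one]) (by nlinarith [g_sq])

private lemma hx_3_4 : dist (X 3) (X 4) = 2 :=
  dist_val _ _ _ _ _ _ _ (by norm_num) (by nlinarith [g_sq])

private lemma hx_3_5 : dist (X 3) (X 5) = 2 :=
  dist_val _ _ _ _ _ _ _ (by norm_num) (by nlinarith [g_sq])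

private lemma hx_4_0 : dist (X 4) (X 0) = (2*g) :=
  dist_val _ _ _ _ _ _ _ (by nlinarith [g_gt_one]) (by nlinarith [g_sq])

private lemma hx_4_1 : dist (X 4) (X 1) = dc :=
  dist_val _ _ _ _ _ _ _ (dc_pos.le) (by rw [dc_sq]; nlinarith [g_sq])

private lemma hx_4_2 : dist (X 4) (X 2) = (2*g) :=
  dist_val _ _ _ _ _ _ _ (by nlinarith [g_gt_one]) (by nlinarith [g_sq])

private lemma hx_4_3 : dist (X 4) (X 3) = 2 :=
  dist_val _ _ _ _ _ _ _ (by norm_num) (by nlinarith [g_sq])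

private lemma hx_4_5 : dist (X 4) (X 5) = 2 :=
  dist_val _ _ _ _ _ _ _ (by norm_num) (by nlinarith [g_sq])

private lemma hx_5_0 : dist (X 5) (X 0) = (2*g) :=
  dist_val _ _ _ _ _ _ _ (by nlinarith [g_gt_one]) (by nlinarith [g_sq])

private lemma hx_5_1 : dist (X 5) (X 1) = (2*g) :=
  dist_val _ _ _ _ _ _ _ (by nlinarith [g_gt_one]) (by nlinarith [g_sq])

private lemma hx_5_2 : dist (X 5) (X 2) = dc :=
  dist_val _ _ _ _ _ _ _ (dc_pos.le) (by rw [dc_sq]; nlinarith [g_sq])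

private lemma hx_5_3 : dist (X 5) (X 3) = 2 :=
  dist_val _ _ _ _ _ _ _ (by norm_num) (by nlinarith [g_sq])

private lemma hx_5_4 : dist (X 5) (X 4) = 2 :=
  dist_val _ _ _ _ _ _ _ (by norm_num) (by nlinarith [g_sq])

private lemma hy_0_1 : dist (Y 0) (Y 1) = 2 :=
  dist_val _ _ _ _ _ _ _ (by norm_num) (by nlinarith [g_sq])

private lemma hy_0_2 : dist (Y 0) (Y 2) = (2*g) :=
  dist_val _ _ _ _ _ _ _ (by nlinarith [g_gt_one]) (by nlinarith [g_sq])

private lemma hy_0_3 : dist (Y 0) (Y 3) = 2 :=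
  dist_val _ _ _ _ _ _ _ (by norm_num) (by nlinarith [g_sq])

private lemma hy_0_4 : dist (Y 0) (Y 4) = dc :=
  dist_val _ _ _ _ _ _ _ (dc_pos.le) (by rw [dc_sq]; nlinarith [g_sq])

private lemma hy_0_5 : dist (Y 0) (Y 5) = (2*g) :=
  dist_val _ _ _ _ _ _ _ (by nlinarith [g_gt_one]) (by nlinarith [g_sq])

private lemma hy_1_0 : dist (Y 1) (Y 0) = 2 :=
  dist_val _ _ _ _ _ _ _ (by norm_num) (by nlinarith [g_sq])

private lemma hy_1_2 : dist (Y 1) (Y 2) = 2 :=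
  dist_val _ _ _ _ _ _ _ (by norm_num) (by nlinarith [g_sq])

private lemma hy_1_3 : dist (Y 1) (Y 3) = (2*g) :=
  dist_val _ _ _ _ _ _ _ (by nlinarith [g_gt_one]) (by nlinarith [g_sq])

private lemma hy_1_4 : dist (Y 1) (Y 4) = (2*g) :=
  dist_val _ _ _ _ _ _ _ (by nlinarith [g_gt_one]) (by nlinarith [g_sq])

private lemma hy_1_5 : dist (Y 1) (Y 5) = dc :=
  dist_val _ _ _ _ _ _ _ (dc_pos.le) (by rw [dc_sq]; nlinarith [g_sq])

private lemma hy_2_0 : dist (Y 2) (Y 0) = (2*g) :=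
  dist_val _ _ _ _ _ _ _ (by nlinarith [g_gt_one]) (by nlinarith [g_sq])

private lemma hy_2_1 : dist (Y 2) (Y 1) = 2 :=
  dist_val _ _ _ _ _ _ _ (by norm_num) (by nlinarith [g_sq])

private lemma hy_2_3 : dist (Y 2) (Y 3) = dc :=
  dist_val _ _ _ _ _ _ _ (dc_pos.le) (by rw [dc_sq]; nlinarith [g_sq])

private lemma hy_2_4 : dist (Y 2) (Y 4) = 2 :=
  dist_val _ _ _ _ _ _ _ (by norm_num) (by nlinarith [g_sq])

private lemma hy_2_5 : dist (Y 2) (Y 5) = (2*g) :=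
  dist_val _ _ _ _ _ _ _ (by nlinarith [g_gt_one]) (by nlinarith [g_sq])

private lemma hy_3_0 : dist (Y 3) (Y 0) = 2 :=
  dist_val _ _ _ _ _ _ _ (by norm_num) (by nlinarith [g_sq])

private lemma hy_3_1 : dist (Y 3) (Y 1) = (2*g) :=
  dist_val _ _ _ _ _ _ _ (by nlinarith [g_gt_one]) (by nlinarith [g_sq])

private lemma hy_3_2 : dist (Y 3) (Y 2) = dc :=
  dist_val _ _ _ _ _ _ _ (dc_pos.le) (by rw [dc_sq]; nlinarith [g_sq])

private lemma hy_3_4 : dist (Y 3) (Y 4) = (2*g) :=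
  dist_val _ _ _ _ _ _ _ (by nlinarith [g_gt_one]) (by nlinarith [g_sq])

private lemma hy_3_5 : dist (Y 3) (Y 5) = 2 :=
  dist_val _ _ _ _ _ _ _ (by norm_num) (by nlinarith [g_sq])

private lemma hy_4_0 : dist (Y 4) (Y 0) = dc :=
  dist_val _ _ _ _ _ _ _ (dc_pos.le) (by rw [dc_sq]; nlinarith [g_sq])

private lemma hy_4_1 : dist (Y 4) (Y 1) = (2*g) :=
  dist_val _ _ _ _ _ _ _ (by nlinarith [g_gt_one]) (by nlinarith [g_sq])

private lemma hy_4_2 : dist (Y 4) (Y 2) = 2 :=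
  dist_val _ _ _ _ _ _ _ (by norm_num) (by nlinarith [g_sq])

private lemma hy_4_3 : dist (Y 4) (Y 3) = (2*g) :=
  dist_val _ _ _ _ _ _ _ (by nlinarith [g_gt_one]) (by nlinarith [g_sq])

private lemma hy_4_5 : dist (Y 4) (Y 5) = 2 :=
  dist_val _ _ _ _ _ _ _ (by norm_num) (by nlinarith [g_sq])

private lemma hy_5_0 : dist (Y 5) (Y 0) = (2*g) :=
  dist_val _ _ _ _ _ _ _ (by nlinarith [g_gt_one]) (by nlinarith [g_sq])

private lemma hy_5_1 : dist (Y 5) (Y 1) = dc :=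
  dist_val _ _ _ _ _ _ _ (dc_pos.le) (by rw [dc_sq]; nlinarith [g_sq])

private lemma hy_5_2 : dist (Y 5) (Y 2) = (2*g) :=
  dist_val _ _ _ _ _ _ _ (by nlinarith [g_gt_one]) (by nlinarith [g_sq])

private lemma hy_5_3 : dist (Y 5) (Y 3) = 2 :=
  dist_val _ _ _ _ _ _ _ (by norm_num) (by nlinarith [g_sq])

private lemma hy_5_4 : dist (Y 5) (Y 4) = 2 :=
  dist_val _ _ _ _ _ _ _ (by norm_num) (by nlinarith [g_sq])

private lemma two_gold_ne_zero : 2 * g ≠ 0 := by nlinarith [g_gt_one]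
private lemma two_gold_ne_two : 2 * g ≠ 2 := by nlinarith [g_gt_one]

private def M : Multiset ℝ := {0, 2, 2, 2*g, 2*g, dc}

private lemma X_inj : Function.Injective X := by
  have key : ∀ i j : Fin 6, i ≠ j → dist (X i) (X j) ≠ 0 := by
    intro i j
    fin_cases i <;> fin_cases j
    exacts [fun hne => absurd rfl hne,
      fun _ => ne_of_eq_of_ne hx_0_1 two_ne_zero,
      fun _ => ne_of_eq_of_ne hx_0_2 two_ne_zero,
      fun _ => ne_of_eq_of_ne hx_0_3 dc_pos.ne',
      fun _ => ne_of_eq_of_ne hx_0_4 two_gold_ne_zero,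
      fun _ => ne_of_eq_of_ne hx_0_5 two_gold_ne_zero,
      fun _ => ne_of_eq_of_ne hx_1_0 two_ne_zero,
      fun hne => absurd rfl hne,
      fun _ => ne_of_eq_of_ne hx_1_2 two_ne_zero,
      fun _ => ne_of_eq_of_ne hx_1_3 two_gold_ne_zero,
      fun _ => ne_of_eq_of_ne hx_1_4 dc_pos.ne',
      fun _ => ne_of_eq_of_ne hx_1_5 two_gold_ne_zero,
      fun _ => ne_of_eq_of_ne hx_2_0 two_ne_zero,
      fun _ => ne_of_eq_of_ne hx_2_1 two_ne_zero,
      fun hne => absurd rfl hne,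
      fun _ => ne_of_eq_of_ne hx_2_3 two_gold_ne_zero,
      fun _ => ne_of_eq_of_ne hx_2_4 two_gold_ne_zero,
      fun _ => ne_of_eq_of_ne hx_2_5 dc_pos.ne',
      fun _ => ne_of_eq_of_ne hx_3_0 dc_pos.ne',
      fun _ => ne_of_eq_of_ne hx_3_1 two_gold_ne_zero,
      fun _ => ne_of_eq_of_ne hx_3_2 two_gold_ne_zero,
      fun hne => absurd rfl hne,
      fun _ => ne_of_eq_of_ne hx_3_4 two_ne_zero,
      fun _ => ne_of_eq_of_ne hx_3_5 two_ne_zero,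
      fun _ => ne_of_eq_of_ne hx_4_0 two_gold_ne_zero,
      fun _ => ne_of_eq_of_ne hx_4_1 dc_pos.ne',
      fun _ => ne_of_eq_of_ne hx_4_2 two_gold_ne_zero,
      fun _ => ne_of_eq_of_ne hx_4_3 two_ne_zero,
      fun hne => absurd rfl hne,
      fun _ => ne_of_eq_of_ne hx_4_5 two_ne_zero,
      fun _ => ne_of_eq_of_ne hx_5_0 two_gold_ne_zero,
      fun _ => ne_of_eq_of_ne hx_5_1 two_gold_ne_zero,
      fun _ => ne_of_eq_of_ne hx_5_2 dc_pos.ne',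
      fun _ => ne_of_eq_of_ne hx_5_3 two_ne_zero,
      fun _ => ne_of_eq_of_ne hx_5_4 two_ne_zero,
      fun hne => absurd rfl hne]
  intro i j h
  by_contra hne
  exact key i j hne (by rw [h, dist_self])

private lemma X_row_0 :
    Multiset.map (fun j => dist (X 0) (X j)) (Finset.univ : Finset (Fin 6)).val = M := by
  rw [show (Finset.univ : Finset (Fin 6)).val = ({0,1,2,3,4,5} : Multiset (Fin 6)) from rfl]
  simp only [Multiset.insert_eq_cons, Multiset.map_cons, Multiset.map_singleton]
  rw [dist_self, hx_0_1, hx_0_2, hx_0_3, hx_0_4, hx_0_5]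
  unfold M
  simp only [Multiset.insert_eq_cons, ← Multiset.singleton_add]
  abel

private lemma X_row_1 :
    Multiset.map (fun j => dist (X 1) (X j)) (Finset.univ : Finset (Fin 6)).val = M := by
  rw [show (Finset.univ : Finset (Fin 6)).val = ({0,1,2,3,4,5} : Multiset (Fin 6)) from rfl]
  simp only [Multiset.insert_eq_cons, Multiset.map_cons, Multiset.map_singleton]
  rw [hx_1_0, dist_self, hx_1_2, hx_1_3, hx_1_4, hx_1_5]
  unfold M
  simp only [Multiset.insert_eq_cons, ← Multiset.singleton_add]
  abel

private lemma X_row_2 :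
    Multiset.map (fun j => dist (X 2) (X j)) (Finset.univ : Finset (Fin 6)).val = M := by
  rw [show (Finset.univ : Finset (Fin 6)).val = ({0,1,2,3,4,5} : Multiset (Fin 6)) from rfl]
  simp only [Multiset.insert_eq_cons, Multiset.map_cons, Multiset.map_singleton]
  rw [hx_2_0, hx_2_1, dist_self, hx_2_3, hx_2_4, hx_2_5]
  unfold M
  simp only [Multiset.insert_eq_cons, ← Multiset.singleton_add]
  abel

private lemma X_row_3 :
    Multiset.map (fun j => dist (X 3) (X j)) (Finset.univ : Finset (Fin 6)).val = M := by
  rw [show (Finset.univ : Finset (Fin 6)).val = ({0,1,2,3,4,5} : Multiset (Fin 6)) from rfl]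
  simp only [Multiset.insert_eq_cons, Multiset.map_cons, Multiset.map_singleton]
  rw [hx_3_0, hx_3_1, hx_3_2, dist_self, hx_3_4, hx_3_5]
  unfold M
  simp only [Multiset.insert_eq_cons, ← Multiset.singleton_add]
  abel

private lemma X_row_4 :
    Multiset.map (fun j => dist (X 4) (X j)) (Finset.univ : Finset (Fin 6)).val = M := by
  rw [show (Finset.univ : Finset (Fin 6)).val = ({0,1,2,3,4,5} : Multiset (Fin 6)) from rfl]
  simp only [Multiset.insert_eq_cons, Multiset.map_cons, Multiset.map_singleton]
  rw [hx_4_0, hx_4_1, hx_4_2, hx_4_3, dist_self, hx_4_5]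
  unfold M
  simp only [Multiset.insert_eq_cons, ← Multiset.singleton_add]
  abel

private lemma X_row_5 :
    Multiset.map (fun j => dist (X 5) (X j)) (Finset.univ : Finset (Fin 6)).val = M := by
  rw [show (Finset.univ : Finset (Fin 6)).val = ({0,1,2,3,4,5} : Multiset (Fin 6)) from rfl]
  simp only [Multiset.insert_eq_cons, Multiset.map_cons, Multiset.map_singleton]
  rw [hx_5_0, hx_5_1, hx_5_2, hx_5_3, hx_5_4, dist_self]
  unfold M
  simp only [Multiset.insert_eq_cons, ← Multiset.singleton_add]
  abel

private lemma Y_inj : Function.Injective Y := by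
  have key : ∀ i j : Fin 6, i ≠ j → dist (Y i) (Y j) ≠ 0 := by
    intro i j
    fin_cases i <;> fin_cases j
    exacts [fun hne => absurd rfl hne,
      fun _ => ne_of_eq_of_ne hy_0_1 two_ne_zero,
      fun _ => ne_of_eq_of_ne hy_0_2 two_gold_ne_zero,
      fun _ => ne_of_eq_of_ne hy_0_3 two_ne_zero,
      fun _ => ne_of_eq_of_ne hy_0_4 dc_pos.ne',
      fun _ => ne_of_eq_of_ne hy_0_5 two_gold_ne_zero,
      fun _ => ne_of_eq_of_ne hy_1_0 two_ne_zero,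
      fun hne => absurd rfl hne,
      fun _ => ne_of_eq_of_ne hy_1_2 two_ne_zero,
      fun _ => ne_of_eq_of_ne hy_1_3 two_gold_ne_zero,
      fun _ => ne_of_eq_of_ne hy_1_4 two_gold_ne_zero,
      fun _ => ne_of_eq_of_ne hy_1_5 dc_pos.ne',
      fun _ => ne_of_eq_of_ne hy_2_0 two_gold_ne_zero,
      fun _ => ne_of_eq_of_ne hy_2_1 two_ne_zero,
      fun hne => absurd rfl hne,
      fun _ => ne_of_eq_of_ne hy_2_3 dc_pos.ne',
      fun _ => ne_of_eq_of_ne hy_2_4 two_ne_zero,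
      fun _ => ne_of_eq_of_ne hy_2_5 two_gold_ne_zero,
      fun _ => ne_of_eq_of_ne hy_3_0 two_ne_zero,
      fun _ => ne_of_eq_of_ne hy_3_1 two_gold_ne_zero,
      fun _ => ne_of_eq_of_ne hy_3_2 dc_pos.ne',
      fun hne => absurd rfl hne,
      fun _ => ne_of_eq_of_ne hy_3_4 two_gold_ne_zero,
      fun _ => ne_of_eq_of_ne hy_3_5 two_ne_zero,
      fun _ => ne_of_eq_of_ne hy_4_0 dc_pos.ne',
      fun _ => ne_of_eq_of_ne hy_4_1 two_gold_ne_zero,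
      fun _ => ne_of_eq_of_ne hy_4_2 two_ne_zero,
      fun _ => ne_of_eq_of_ne hy_4_3 two_gold_ne_zero,
      fun hne => absurd rfl hne,
      fun _ => ne_of_eq_of_ne hy_4_5 two_ne_zero,
      fun _ => ne_of_eq_of_ne hy_5_0 two_gold_ne_zero,
      fun _ => ne_of_eq_of_ne hy_5_1 dc_pos.ne',
      fun _ => ne_of_eq_of_ne hy_5_2 two_gold_ne_zero,
      fun _ => ne_of_eq_of_ne hy_5_3 two_ne_zero,
      fun _ => ne_of_eq_of_ne hy_5_4 two_ne_zero,
      fun hne => absurd rfl hne]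
  intro i j h
  by_contra hne
  exact key i j hne (by rw [h, dist_self])

private lemma Y_row_0 :
    Multiset.map (fun j => dist (Y 0) (Y j)) (Finset.univ : Finset (Fin 6)).val = M := by
  rw [show (Finset.univ : Finset (Fin 6)).val = ({0,1,2,3,4,5} : Multiset (Fin 6)) from rfl]
  simp only [Multiset.insert_eq_cons, Multiset.map_cons, Multiset.map_singleton]
  rw [dist_self, hy_0_1, hy_0_2, hy_0_3, hy_0_4, hy_0_5]
  unfold M
  simp only [Multiset.insert_eq_cons, ← Multiset.singleton_add]
  abel

private lemma Y_row_1 :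
    Multiset.map (fun j => dist (Y 1) (Y j)) (Finset.univ : Finset (Fin 6)).val = M := by
  rw [show (Finset.univ : Finset (Fin 6)).val = ({0,1,2,3,4,5} : Multiset (Fin 6)) from rfl]
  simp only [Multiset.insert_eq_cons, Multiset.map_cons, Multiset.map_singleton]
  rw [hy_1_0, dist_self, hy_1_2, hy_1_3, hy_1_4, hy_1_5]
  unfold M
  simp only [Multiset.insert_eq_cons, ← Multiset.singleton_add]
  abel

private lemma Y_row_2 :
    Multiset.map (fun j => dist (Y 2) (Y j)) (Finset.univ : Finset (Fin 6)).val = M := by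
  rw [show (Finset.univ : Finset (Fin 6)).val = ({0,1,2,3,4,5} : Multiset (Fin 6)) from rfl]
  simp only [Multiset.insert_eq_cons, Multiset.map_cons, Multiset.map_singleton]
  rw [hy_2_0, hy_2_1, dist_self, hy_2_3, hy_2_4, hy_2_5]
  unfold M
  simp only [Multiset.insert_eq_cons, ← Multiset.singleton_add]
  abel

private lemma Y_row_3 :
    Multiset.map (fun j => dist (Y 3) (Y j)) (Finset.univ : Finset (Fin 6)).val = M := by
  rw [show (Finset.univ : Finset (Fin 6)).val = ({0,1,2,3,4,5} : Multiset (Fin 6)) from rfl]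
  simp only [Multiset.insert_eq_cons, Multiset.map_cons, Multiset.map_singleton]
  rw [hy_3_0, hy_3_1, hy_3_2, dist_self, hy_3_4, hy_3_5]
  unfold M
  simp only [Multiset.insert_eq_cons, ← Multiset.singleton_add]
  abel

private lemma Y_row_4 :
    Multiset.map (fun j => dist (Y 4) (Y j)) (Finset.univ : Finset (Fin 6)).val = M := by
  rw [show (Finset.univ : Finset (Fin 6)).val = ({0,1,2,3,4,5} : Multiset (Fin 6)) from rfl]
  simp only [Multiset.insert_eq_cons, Multiset.map_cons, Multiset.map_singleton]
  rw [hy_4_0, hy_4_1, hy_4_2, hy_4_3, dist_self, hy_4_5]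
  unfold M
  simp only [Multiset.insert_eq_cons, ← Multiset.singleton_add]
  abel

private lemma Y_row_5 :
    Multiset.map (fun j => dist (Y 5) (Y j)) (Finset.univ : Finset (Fin 6)).val = M := by
  rw [show (Finset.univ : Finset (Fin 6)).val = ({0,1,2,3,4,5} : Multiset (Fin 6)) from rfl]
  simp only [Multiset.insert_eq_cons, Multiset.map_cons, Multiset.map_singleton]
  rw [hy_5_0, hy_5_1, hy_5_2, hy_5_3, hy_5_4, dist_self]
  unfold M
  simp only [Multiset.insert_eq_cons, ← Multiset.singleton_add]
  abel

private def Eg : Fin 6 → Fin 6 → Bool :=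
  ![![false, true, false, true, false, false], ![true, false, true, false, false, false], ![false, true, false, false, true, false], ![true, false, false, false, false, true], ![false, false, true, false, false, true], ![false, false, false, true, true, false]]

private lemma key_edge : ∀ a b : Fin 6, dist (Y a) (Y b) = 2 → Eg a b = true := by
  intro a b
  fin_cases a <;> fin_cases b
  exacts [fun h => absurd ((dist_self (Y 0)).symm.trans h) (by norm_num),
    fun _ => by decide,
    fun h => absurd (hy_0_2.symm.trans h) two_gold_ne_two,
    fun _ => by decide,
    fun h => absurd (hy_0_4.symm.trans h) dc_ne_two,
    fun h => absurd (hy_0_5.symm.trans h) two_gold_ne_two,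
    fun _ => by decide,
    fun h => absurd ((dist_self (Y 1)).symm.trans h) (by norm_num),
    fun _ => by decide,
    fun h => absurd (hy_1_3.symm.trans h) two_gold_ne_two,
    fun h => absurd (hy_1_4.symm.trans h) two_gold_ne_two,
    fun h => absurd (hy_1_5.symm.trans h) dc_ne_two,
    fun h => absurd (hy_2_0.symm.trans h) two_gold_ne_two,
    fun _ => by decide,
    fun h => absurd ((dist_self (Y 2)).symm.trans h) (by norm_num),
    fun h => absurd (hy_2_3.symm.trans h) dc_ne_two,
    fun _ => by decide,
    fun h => absurd (hy_2_5.symm.trans h) two_gold_ne_two,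
    fun _ => by decide,
    fun h => absurd (hy_3_1.symm.trans h) two_gold_ne_two,
    fun h => absurd (hy_3_2.symm.trans h) dc_ne_two,
    fun h => absurd ((dist_self (Y 3)).symm.trans h) (by norm_num),
    fun h => absurd (hy_3_4.symm.trans h) two_gold_ne_two,
    fun _ => by decide,
    fun h => absurd (hy_4_0.symm.trans h) dc_ne_two,
    fun h => absurd (hy_4_1.symm.trans h) two_gold_ne_two,
    fun _ => by decide,
    fun h => absurd (hy_4_3.symm.trans h) two_gold_ne_two,
    fun h => absurd ((dist_self (Y 4)).symm.trans h) (by norm_num),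
    fun _ => by decide,
    fun h => absurd (hy_5_0.symm.trans h) two_gold_ne_two,
    fun h => absurd (hy_5_1.symm.trans h) dc_ne_two,
    fun h => absurd (hy_5_2.symm.trans h) two_gold_ne_two,
    fun _ => by decide,
    fun _ => by decide,
    fun h => absurd ((dist_self (Y 5)).symm.trans h) (by norm_num)]

private lemma no_triangle : ∀ a b c : Fin 6, ¬(Eg a b = true ∧ Eg a c = true ∧ Eg b c = true) := by decide

end SixPoint

/-- There are two injective 6-point configurations in `ℝ³` all of whose
nodes have the same unordered distance list `M`, yet the configurations are not
congruent. -/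
theorem exists_noncongruent_six_point_configs_with_same_distance_lists :
    ∃ (x y : Fin 6 → EuclideanSpace ℝ (Fin 3)) (M : Multiset ℝ),
      Function.Injective x ∧ Function.Injective y ∧
      (∀ i : Fin 6,
        Multiset.map (fun j => dist (x i) (x j)) (Finset.univ : Finset (Fin 6)).val = M) ∧
      (∀ i : Fin 6,
        Multiset.map (fun j => dist (y i) (y j)) (Finset.univ : Finset (Fin 6)).val = M) ∧
      ¬ ∃ σ : Equiv.Perm (Fin 6),
          ∀ i j, dist (x i) (x j) = dist (y (σ i)) (y (σ j)) := by
  refine ⟨X, Y, M, X_inj, Y_inj, ?_, ?_, ?_⟩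
  · intro i
    fin_cases i
    exacts [X_row_0, X_row_1, X_row_2, X_row_3, X_row_4, X_row_5]
  · intro i
    fin_cases i
    exacts [Y_row_0, Y_row_1, Y_row_2, Y_row_3, Y_row_4, Y_row_5]
  · rintro ⟨σ, hσ⟩
    have e01 := hσ 0 1; rw [hx_0_1] at e01
    have e02 := hσ 0 2; rw [hx_0_2] at e02
    have e12 := hσ 1 2; rw [hx_1_2] at e12
    exact no_triangle (σ 0) (σ 1) (σ 2)
      ⟨key_edge _ _ e01.symm, key_edge _ _ e02.symm, key_edge _ _ e12.symm⟩
end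

section
/- There exist injective point configurations x, y : Fin 6 → EuclideanSpace ℝ (Fin 3) and a single multiset M of real numbers such that: (1) for every i ∈ Fin 6, the multiset {dist (x i) (x j) : j ∈ Fin 6} equals M, and for every i ∈ Fin 6, the multiset {dist (y i) (y j) : j ∈ Fin 6} equals M; and (2) there exists δ > 0 such that y contains at least two distinct 3-element subsets {i, j, k} whose three pairwise distances are all equal to δ (equilateral triangles of side δ), while x contains no 3-element subset whose three pairwise distances are all equal to δ. (Hence counting equilateral triangles, a piece of 3-order geometric information, distinguishes configurations whose per-node distance lists are identical.) -/
/-- A 3-element subset `s` of the index set forms an equilateral triangle of side `δ`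
in the configuration `x` if all pairwise distances between distinct points of `s`
are equal to `δ`. -/
def IsEquilateralTriangle {n : ℕ} (x : Fin n → EuclideanSpace ℝ (Fin 3))
    (s : Finset (Fin n)) (δ : ℝ) : Prop :=
  s.card = 3 ∧ ∀ i ∈ s, ∀ j ∈ s, i ≠ j → dist (x i) (x j) = δ

section StatementThreeAux

@[simp]
lemma my_cons_val_five {α : Type*} {m : ℕ} (x : α) (u : Fin (m+5) → α) :
    Matrix.vecCons x u 5 =
      Matrix.vecHead (Matrix.vecTail (Matrix.vecTail (Matrix.vecTail (Matrix.vecTail u)))) :=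
  rfl

/-- Construct a point of `ℝ³` from three coordinates. -/
noncomputable def pt3 (a b c : ℝ) : EuclideanSpace ℝ (Fin 3) :=
  (WithLp.equiv 2 (Fin 3 → ℝ)).symm ![a, b, c]

lemma dist_pt3 (a b c a' b' c' d : ℝ) (hd : 0 ≤ d)
    (h : (a - a')^2 + (b - b')^2 + (c - c')^2 = d^2) :
    dist (pt3 a b c) (pt3 a' b' c') = d := by
  rw [EuclideanSpace.dist_eq]
  rw [show d = Real.sqrt (d^2) from (Real.sqrt_sq hd).symm]
  congr 1
  simp [pt3, Fin.sum_univ_three, Real.dist_eq, ← h, sq_abs]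

/-- The four distance values occurring in our configurations. -/
noncomputable def vv : Fin 4 → ℝ := ![0, 6, 6 * Real.sqrt 3, 12]

/-- The regular hexagon of side `6`. -/
noncomputable def XX : Fin 6 → EuclideanSpace ℝ (Fin 3) :=
  ![pt3 6 0 0, pt3 3 (3*Real.sqrt 3) 0, pt3 (-3) (3*Real.sqrt 3) 0,
    pt3 (-6) 0 0, pt3 (-3) (-(3*Real.sqrt 3)) 0, pt3 3 (-(3*Real.sqrt 3)) 0]

/-- Two parallel equilateral triangles of side `6`, twisted by `60°`, at height `4√6`. -/
noncomputable def YY : Fin 6 → EuclideanSpace ℝ (Fin 3) :=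
  ![pt3 0 0 0, pt3 6 0 0, pt3 3 (3*Real.sqrt 3) 0,
    pt3 6 (2*Real.sqrt 3) (4*Real.sqrt 6), pt3 0 (2*Real.sqrt 3) (4*Real.sqrt 6),
    pt3 3 (-Real.sqrt 3) (4*Real.sqrt 6)]

/-- Coded distance table of the hexagon. -/
def TX : Fin 6 → Fin 6 → Fin 4 := fun i j =>
  ![![0,1,2,3,2,1], ![1,0,1,2,3,2], ![2,1,0,1,2,3],
    ![3,2,1,0,1,2], ![2,3,2,1,0,1], ![1,2,3,2,1,0]] i j

/-- Coded distance table of the twisted double triangle. -/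
def TY : Fin 6 → Fin 6 → Fin 4 := fun i j =>
  ![![0,1,1,3,2,2], ![1,0,1,2,3,2], ![1,1,0,2,2,3],
    ![3,2,2,0,1,1], ![2,3,2,1,0,1], ![2,2,3,1,1,0]] i j

set_option maxHeartbeats 2000000 in
lemma hX : ∀ i j, dist (XX i) (XX j) = vv (TX i j) := by
  have h3 : Real.sqrt 3 ^ 2 = 3 := Real.sq_sqrt (by norm_num)
  intro i j
  fin_cases i <;> fin_cases j <;>
    simp [XX, TX, vv, Matrix.vecHead, Matrix.vecTail] <;>
    first
      | rfl
      | (refine dist_pt3 _ _ _ _ _ _ _ (by positivity) ?_; nlinarith [h3])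

set_option maxHeartbeats 2000000 in
lemma hY : ∀ i j, dist (YY i) (YY j) = vv (TY i j) := by
  have h3 : Real.sqrt 3 ^ 2 = 3 := Real.sq_sqrt (by norm_num)
  have h6 : Real.sqrt 6 ^ 2 = 6 := Real.sq_sqrt (by norm_num)
  intro i j
  fin_cases i <;> fin_cases j <;>
    simp [YY, TY, vv, Matrix.vecHead, Matrix.vecTail] <;>
    first
      | rfl
      | (refine dist_pt3 _ _ _ _ _ _ _ (by positivity) ?_; nlinarith [h3, h6])

lemma vv_pos : ∀ k : Fin 4, k ≠ 0 → 0 < vv k := by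
  intro k hk
  fin_cases k
  · exact absurd rfl hk
  · norm_num [vv]
  · exact show (0:ℝ) < 6 * Real.sqrt 3 by positivity
  · norm_num [vv]

lemma vv_eq_six : ∀ k : Fin 4, vv k = 6 → k = 1 := by
  have h3 : Real.sqrt 3 ^ 2 = 3 := Real.sq_sqrt (by norm_num)
  intro k hk
  fin_cases k
  · norm_num [vv] at hk
  · rfl
  · exfalso
    have hk' : 6 * Real.sqrt 3 = 6 := hk
    nlinarith [hk', h3]
  · norm_num [vv] at hk

lemma inj_of_table (x : Fin 6 → EuclideanSpace ℝ (Fin 3)) (T : Fin 6 → Fin 6 → Fin 4)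
    (hx : ∀ i j, dist (x i) (x j) = vv (T i j)) (hT : ∀ i j, i ≠ j → T i j ≠ 0) :
    Function.Injective x := by
  intro i j h
  by_contra hne
  have h0 : dist (x i) (x j) = 0 := by rw [h, dist_self]
  rw [hx] at h0
  exact absurd h0 (ne_of_gt (vv_pos _ (hT i j hne)))

lemma list_of_table (x : Fin 6 → EuclideanSpace ℝ (Fin 3)) (T : Fin 6 → Fin 6 → Fin 4)
    (hx : ∀ i j, dist (x i) (x j) = vv (T i j))
    (hperm : ∀ i, List.Perm [T i 0, T i 1, T i 2, T i 3, T i 4, T i 5]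
      [0, 1, 2, 3, 2, 1]) :
    ∀ i : Fin 6, Multiset.map (fun j => dist (x i) (x j)) (Finset.univ : Finset (Fin 6)).val
      = ↑(List.map vv [0, 1, 2, 3, 2, 1]) := by
  intro i
  have huniv : ((Finset.univ : Finset (Fin 6)).val : Multiset (Fin 6))
      = (([0,1,2,3,4,5] : List (Fin 6)) : Multiset (Fin 6)) := by decide
  rw [huniv, Multiset.map_coe]
  have hlist : List.map (fun j => dist (x i) (x j)) [0,1,2,3,4,5]
      = List.map vv [T i 0, T i 1, T i 2, T i 3, T i 4, T i 5] := by
    simp [hx]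
  rw [hlist]
  exact Multiset.coe_eq_coe.mpr ((hperm i).map vv)

end StatementThreeAux

/-- There are two injective 6-point configurations in `ℝ³` all of whose
nodes have the same unordered distance list `M`, yet for some `δ > 0` one configuration
contains at least two distinct equilateral triangles of side `δ` while the other
contains none. -/
theorem exists_six_point_configs_same_distance_lists_distinguished_by_triangles :
    ∃ (x y : Fin 6 → EuclideanSpace ℝ (Fin 3)) (M : Multiset ℝ),
      Function.Injective x ∧ Function.Injective y ∧
      (∀ i : Fin 6,
        Multiset.map (fun j => dist (x i) (x j)) (Finset.univ : Finset (Fin 6)).val = M) ∧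
      (∀ i : Fin 6,
        Multiset.map (fun j => dist (y i) (y j)) (Finset.univ : Finset (Fin 6)).val = M) ∧
      ∃ δ : ℝ, 0 < δ ∧
        (∃ s t : Finset (Fin 6), s ≠ t ∧
          IsEquilateralTriangle y s δ ∧ IsEquilateralTriangle y t δ) ∧
        ¬ ∃ s : Finset (Fin 6), IsEquilateralTriangle x s δ := by
  refine ⟨XX, YY, ↑(List.map vv [0, 1, 2, 3, 2, 1]),
    inj_of_table XX TX hX (by decide), inj_of_table YY TY hY (by decide),
    list_of_table XX TX hX (by decide), list_of_table YY TY hY (by decide),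
    6, by norm_num, ⟨{0,1,2}, {3,4,5}, by decide, ⟨by decide, ?_⟩, ⟨by decide, ?_⟩⟩, ?_⟩
  · intro i hi j hj hne
    fin_cases hi <;> fin_cases hj <;>
      first
        | exact absurd rfl hne
        | (rw [hY]; norm_num [TY, vv, Matrix.vecHead, Matrix.vecTail] <;> rfl)
  · intro i hi j hj hne
    fin_cases hi <;> fin_cases hj <;>
      first
        | exact absurd rfl hne
        | (rw [hY]; norm_num [TY, vv, Matrix.vecHead, Matrix.vecTail] <;> rfl)
  · rintro ⟨s, hcard, htri⟩
    obtain ⟨i, j, k, hij, hik, hjk, rfl⟩ := Finset.card_eq_three.mp hcard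
    have e1 : TX i j = 1 :=
      vv_eq_six _ (by rw [← hX]; exact htri i (by simp) j (by simp) hij)
    have e2 : TX i k = 1 :=
      vv_eq_six _ (by rw [← hX]; exact htri i (by simp) k (by simp) hik)
    have e3 : TX j k = 1 :=
      vv_eq_six _ (by rw [← hX]; exact htri j (by simp) k (by simp) hjk)
    exact (by decide : ∀ i j k : Fin 6, i ≠ j → i ≠ k → j ≠ k →
      ¬(TX i j = 1 ∧ TX i k = 1 ∧ TX j k = 1)) i j k hij hik hjk ⟨e1, e2, e3⟩
end
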